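/- Let L > 0, let φ : [0, L] → ℝ be continuous, and let γ : [0, L] → ℝ² be differentiable with γ'(s) = (cos φ(s), sin φ(s)) for all s ∈ [0, L]. Then the controllability Gramian W := ∫₀ᴸ G(s) G(s)ᵀ ds satisfies det(W) > 0; in particular W is invertible. -/

import Mathlib

open Matrix Real

/-- The planar rotation matrix `R(θ)`. -/
noncomputable def rot (θ : ℝ) : Matrix (Fin 2) (Fin 2) ℝ :=
  !![Real.cos θ, -Real.sin θ; Real.sin θ, Real.cos θ]

/-- `γ⊥ = R(π/2) γ`. -/
noncomputable def gperp (γ : Fin 2 → ℝ) : Fin 2 → ℝ :=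
  (rot (Real.pi / 2)).mulVec γ

/-- The grasp map matrix `G`: its first two rows form `R(φ)`, its third row is `(γ⊥)ᵀ R(φ)`. -/
noncomputable def graspMap (φ : ℝ) (γ : Fin 2 → ℝ) : Matrix (Fin 3) (Fin 2) ℝ :=
  Matrix.of fun i j =>
    if h : (i : ℕ) < 2 then rot φ ⟨i, h⟩ j
    else Matrix.vecMul (gperp γ) (rot φ) j

open MeasureTheory in
lemma graspMap_mul_transpose (φ : ℝ) (v : Fin 2 → ℝ) :
    graspMap φ v * (graspMap φ v)ᵀ =
      !![1, 0, -(v 1); 0, 1, v 0; -(v 1), v 0, (v 0)^2 + (v 1)^2] := by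
  ext i j
  fin_cases i <;> fin_cases j <;>
    simp [graspMap, gperp, rot, Matrix.mul_apply, Matrix.vecMul, Matrix.mulVec,
      Fin.sum_univ_two, dotProduct] <;>
    first
      | ring1
      | linear_combination Real.sin_sq_add_cos_sq φ
      | linear_combination (-(v 1)) * Real.sin_sq_add_cos_sq φ
      | linear_combination (v 0) * Real.sin_sq_add_cos_sq φ
      | linear_combination ((v 0)^2 + (v 1)^2) * Real.sin_sq_add_cos_sq φ

open MeasureTheory in
lemma integral_sub_sq {L : ℝ} (hL : 0 < L) {g : ℝ → ℝ} (hg : ContinuousOn g (Set.Icc 0 L)) :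
    ∫ s in (0:ℝ)..L, (g s - (∫ t in (0:ℝ)..L, g t)/L)^2
      = (∫ s in (0:ℝ)..L, (g s)^2) - (∫ s in (0:ℝ)..L, g s)^2 / L := by
  set I := ∫ t in (0:ℝ)..L, g t with hI
  have h1 : IntervalIntegrable g volume 0 L := hg.intervalIntegrable_of_Icc hL.le
  have h2 : IntervalIntegrable (fun s => (g s)^2) volume 0 L :=
    (hg.pow 2).intervalIntegrable_of_Icc hL.le
  have hcongr : (∫ s in (0:ℝ)..L, (g s - I/L)^2)
      = ∫ s in (0:ℝ)..L, (((g s)^2 - (2*(I/L)) * g s) + (I/L)^2) := by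
    congr 1; funext s; ring
  rw [hcongr, intervalIntegral.integral_add (h2.sub (h1.const_mul _))
        intervalIntegrable_const,
      intervalIntegral.integral_sub h2 (h1.const_mul _),
      intervalIntegral.integral_const_mul, intervalIntegral.integral_const]
  rw [← hI]
  field_simp
  linear_combination (I^2*(L*L⁻¹+1)) * mul_inv_cancel₀ hL.ne'


open MeasureTheory in
/-- For a unit-speed closed-or-open curve with continuous angle function, the controllability
Gramian `W = ∫₀ᴸ G Gᵀ ds` (entrywise integral) has positive determinant; in particular `W`
is invertible. -/
theorem stmt_5 (L : ℝ) (hL : 0 < L) (φ : ℝ → ℝ) (γ : ℝ → (Fin 2 → ℝ))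
    (hφ : ContinuousOn φ (Set.Icc 0 L))
    (hγ : ∀ s ∈ Set.Icc (0:ℝ) L,
      HasDerivWithinAt γ ![Real.cos (φ s), Real.sin (φ s)] (Set.Icc 0 L) s) :
    0 < (Matrix.of fun i j =>
          ∫ s in (0:ℝ)..L, (graspMap (φ s) (γ s) * (graspMap (φ s) (γ s))ᵀ) i j :
          Matrix (Fin 3) (Fin 3) ℝ).det ∧
    IsUnit (Matrix.of fun i j =>
          ∫ s in (0:ℝ)..L, (graspMap (φ s) (γ s) * (graspMap (φ s) (γ s))ᵀ) i j :
          Matrix (Fin 3) (Fin 3) ℝ) := by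
  have hγc : ContinuousOn γ (Set.Icc 0 L) := fun s hs => (hγ s hs).continuousWithinAt
  have hg0 : ContinuousOn (fun s => γ s 0) (Set.Icc 0 L) :=
    (continuous_apply (0 : Fin 2)).comp_continuousOn hγc
  have hg1 : ContinuousOn (fun s => γ s 1) (Set.Icc 0 L) :=
    (continuous_apply (1 : Fin 2)).comp_continuousOn hγc
  set A := ∫ s in (0:ℝ)..L, γ s 0 with hA
  set B := ∫ s in (0:ℝ)..L, γ s 1 with hB
  set C := ∫ s in (0:ℝ)..L, ((γ s 0)^2 + (γ s 1)^2) with hC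
  -- the Gramian equals an explicit matrix
  have hW : (Matrix.of fun i j =>
        ∫ s in (0:ℝ)..L, (graspMap (φ s) (γ s) * (graspMap (φ s) (γ s))ᵀ) i j :
        Matrix (Fin 3) (Fin 3) ℝ) = !![L, 0, -B; 0, L, A; -B, A, C] := by
    ext i j
    have hrw : (fun s => (graspMap (φ s) (γ s) * (graspMap (φ s) (γ s))ᵀ) i j)
        = fun s => (!![1, 0, -(γ s 1); 0, 1, γ s 0;
            -(γ s 1), γ s 0, (γ s 0)^2 + (γ s 1)^2] : Matrix (Fin 3) (Fin 3) ℝ) i j := by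
      funext s; rw [graspMap_mul_transpose]
    rw [Matrix.of_apply]
    show (∫ s in (0:ℝ)..L, (graspMap (φ s) (γ s) * (graspMap (φ s) (γ s))ᵀ) i j) = _
    rw [hrw]
    fin_cases i <;> fin_cases j <;>
      simp [hA, hB, hC, intervalIntegral.integral_const, intervalIntegral.integral_neg]
  have hdet : (!![L, 0, -B; 0, L, A; -B, A, C] : Matrix (Fin 3) (Fin 3) ℝ).det
      = L * (L*C - A^2 - B^2) := by
    simp [Matrix.det_fin_three]; ring
  -- strict positivity of L*C - A^2 - B^2
  have hFc : ContinuousOn (fun s => (γ s 0 - A/L)^2 + (γ s 1 - B/L)^2) (Set.Icc 0 L) :=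
    ((hg0.sub continuousOn_const).pow 2).add ((hg1.sub continuousOn_const).pow 2)
  have hex : ∃ c ∈ Set.Icc (0:ℝ) L, 0 < (γ c 0 - A/L)^2 + (γ c 1 - B/L)^2 := by
    by_contra h
    push_neg at h
    have hconst : ∀ c ∈ Set.Icc (0:ℝ) L, γ c = ![A/L, B/L] := by
      intro c hc
      have h0 := h c hc
      have h1 : γ c 0 = A/L := by nlinarith [sq_nonneg (γ c 0 - A/L), sq_nonneg (γ c 1 - B/L)]
      have h2 : γ c 1 = B/L := by nlinarith [sq_nonneg (γ c 0 - A/L), sq_nonneg (γ c 1 - B/L)]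
      funext i; fin_cases i <;> simp [h1, h2]
    have hmem : L/2 ∈ Set.Icc (0:ℝ) L := ⟨by linarith, by linarith⟩
    have hd0 : HasDerivWithinAt γ 0 (Set.Icc 0 L) (L/2) :=
      (hasDerivWithinAt_const (L/2) (Set.Icc 0 L) (![A/L, B/L])).congr hconst (hconst _ hmem)
    have huniq : UniqueDiffWithinAt ℝ (Set.Icc (0:ℝ) L) (L/2) := (uniqueDiffOn_Icc hL) _ hmem
    have heq : ![Real.cos (φ (L/2)), Real.sin (φ (L/2))] = (0 : Fin 2 → ℝ) := by
      rw [← (hγ (L/2) hmem).derivWithin huniq, hd0.derivWithin huniq]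
    have hc0 : Real.cos (φ (L/2)) = 0 := by simpa using congrFun heq 0
    have hs0 : Real.sin (φ (L/2)) = 0 := by simpa using congrFun heq 1
    nlinarith [Real.sin_sq_add_cos_sq (φ (L/2))]
  have hFpos : 0 < ∫ s in (0:ℝ)..L, ((γ s 0 - A/L)^2 + (γ s 1 - B/L)^2) :=
    intervalIntegral.integral_pos hL hFc (fun x _ => by positivity) hex
  have hsplitF : (∫ s in (0:ℝ)..L, ((γ s 0 - A/L)^2 + (γ s 1 - B/L)^2))
      = (∫ s in (0:ℝ)..L, (γ s 0 - A/L)^2) + ∫ s in (0:ℝ)..L, (γ s 1 - B/L)^2 :=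
    intervalIntegral.integral_add
      (((hg0.sub continuousOn_const).pow 2).intervalIntegrable_of_Icc hL.le)
      (((hg1.sub continuousOn_const).pow 2).intervalIntegrable_of_Icc hL.le)
  have hsplitC : C = (∫ s in (0:ℝ)..L, (γ s 0)^2) + ∫ s in (0:ℝ)..L, (γ s 1)^2 := by
    rw [hC]
    exact intervalIntegral.integral_add ((hg0.pow 2).intervalIntegrable_of_Icc hL.le)
      ((hg1.pow 2).intervalIntegrable_of_Icc hL.le)
  have e0 := integral_sub_sq hL hg0
  have e1 := integral_sub_sq hL hg1
  rw [← hA] at e0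
  rw [← hB] at e1
  have hkey : 0 < L*C - A^2 - B^2 := by
    have : L*C - A^2 - B^2
        = L * ∫ s in (0:ℝ)..L, ((γ s 0 - A/L)^2 + (γ s 1 - B/L)^2) := by
      rw [hsplitF, e0, e1, hsplitC]
      field_simp
      ring
    rw [this]
    exact mul_pos hL hFpos
  have hdetpos : 0 < (!![L, 0, -B; 0, L, A; -B, A, C] : Matrix (Fin 3) (Fin 3) ℝ).det := by
    rw [hdet]; exact mul_pos hL hkey
  rw [hW]
  exact ⟨hdetpos, (Matrix.isUnit_iff_isUnit_det _).2 (isUnit_iff_ne_zero.2 hdetpos.ne')⟩
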